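/- Second step of the IHT support theorem: let A have the (2k, δ_{2k})-RIP (norm version), x ∈ 𝒮^p_{η,k,r} with ‖x|_{S_r(x)ᶜ}‖₂ ≤ η and ‖A‖ ≤ 1, and let v ∈ ℝ^N be k-sparse with ‖Av − Ax‖₂ ≤ √τ/β(A). If √τ < (r − η/(1−δ_{2k}))/(1 + 1/((1−δ_{2k})β(A))), then for every index i, |(x|_{S_r(x)})_i − v_i| ≤ √τ/(β(A)(1−δ_{2k})) + η/(1−δ_{2k}) < r − √τ. -/

import Mathlib

open Finset

/-- ℓ¹ norm of a vector. -/
noncomputable def l1 {N : ℕ} (x : Fin N → ℝ) : ℝ := ∑ i, |x i|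

/-- ℓ² norm of a vector. -/
noncomputable def l2 {n : ℕ} (x : Fin n → ℝ) : ℝ := Real.sqrt (∑ i, (x i) ^ 2)

/-- Restriction of a vector to an index set (zero off the set). -/
noncomputable def restr {N : ℕ} (Λ : Finset (Fin N)) (x : Fin N → ℝ) : Fin N → ℝ :=
  fun i => if i ∈ Λ then x i else 0

/-- Support of a vector as a finset. -/
noncomputable def supp {N : ℕ} (z : Fin N → ℝ) : Finset (Fin N) :=
  univ.filter (fun i => z i ≠ 0)

/-- Null Space Property of order `k` with constant `γ`. -/
def NSP {m N : ℕ} (A : Matrix (Fin m) (Fin N) ℝ) (k : ℕ) (γ : ℝ) : Prop :=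
  ∀ z : Fin N → ℝ, A.mulVec z = 0 → ∀ Λ : Finset (Fin N), Λ.card ≤ k →
    l1 (restr Λ z) ≤ γ * l1 (restr Λᶜ z)

/-- Restricted Isometry Property of order `K` with constant `δ` (norm version). -/
noncomputable def RIP {m N : ℕ} (A : Matrix (Fin m) (Fin N) ℝ) (K : ℕ) (δ : ℝ) : Prop :=
  ∀ z : Fin N → ℝ, (supp z).card ≤ K →
    (1 - δ) * l2 z ≤ l2 (A.mulVec z) ∧ l2 (A.mulVec z) ≤ (1 + δ) * l2 z

/-- ℓ¹ best `k`-term approximation error. -/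
noncomputable def sigma1 {N : ℕ} (k : ℕ) (x : Fin N → ℝ) : ℝ :=
  sInf {t : ℝ | ∃ z : Fin N → ℝ, (supp z).card ≤ k ∧ t = l1 (x - z)}

/-- Index set of entries exceeding `r` in absolute value. -/
noncomputable def Sr {N : ℕ} (r : ℝ) (x : Fin N → ℝ) : Finset (Fin N) :=
  univ.filter (fun i => r < |x i|)

/-- The Hölder constant κ_p(N,k). -/
noncomputable def kappa (p : ℝ) (N k : ℕ) : ℝ :=
  if p = 1 then 1 else ((N - k : ℕ) : ℝ) ^ (1 - 1 / p)

/-- Membership in the class 𝒮^p_{η,k,r} of sparse vectors affected by bounded noise. -/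
noncomputable def inClass {N : ℕ} (p η : ℝ) (k : ℕ) (r : ℝ) (x : Fin N → ℝ) : Prop :=
  (Sr r x).card ≤ k ∧ ∑ i ∈ (Sr r x)ᶜ, |x i| ^ p ≤ η ^ p

/-- Entrywise hard thresholding with threshold `t`. -/
noncomputable def hardThr {N : ℕ} (t : ℝ) (z : Fin N → ℝ) : Fin N → ℝ :=
  fun i => if t < |z i| then z i else 0

lemma l2_nonneg' {n : ℕ} (x : Fin n → ℝ) : 0 ≤ l2 x := Real.sqrt_nonneg _

lemma abs_le_l2' {n : ℕ} (x : Fin n → ℝ) (i : Fin n) : |x i| ≤ l2 x := by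
  rw [l2, ← Real.sqrt_sq_eq_abs]
  exact Real.sqrt_le_sqrt (Finset.single_le_sum (fun j _ => sq_nonneg (x j)) (mem_univ i))

lemma l2_eq_norm' {n : ℕ} (x : Fin n → ℝ) : l2 x = ‖(WithLp.equiv 2 (Fin n → ℝ)).symm x‖ := by
  rw [EuclideanSpace.norm_eq, l2]
  congr 1; apply Finset.sum_congr rfl; intro i _; simp [Real.norm_eq_abs, sq_abs]

lemma l2_add_le' {n : ℕ} (x y : Fin n → ℝ) : l2 (x + y) ≤ l2 x + l2 y := by
  simp only [l2_eq_norm']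
  rw [show (WithLp.equiv 2 (Fin n → ℝ)).symm (x+y) = (WithLp.equiv 2 (Fin n → ℝ)).symm x + (WithLp.equiv 2 (Fin n → ℝ)).symm y from rfl]
  exact norm_add_le _ _

lemma l2_neg' {n : ℕ} (x : Fin n → ℝ) : l2 (-x) = l2 x := by
  simp [l2]

theorem stmt14 {m N : ℕ} (A : Matrix (Fin m) (Fin N) ℝ) (k : ℕ)
    (δ β η r τ : ℝ)
    (hRIP : RIP A (2 * k) δ) (hδ : δ < 1) (hβ : 0 < β) (hτ0 : 0 ≤ τ)
    (hη : 0 ≤ η)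
    (hAnorm : ∀ z : Fin N → ℝ, l2 (A.mulVec z) ≤ l2 z)
    (x : Fin N → ℝ) (hcard : (Sr r x).card ≤ k)
    (htail2 : l2 (restr (Sr r x)ᶜ x) ≤ η)
    (v : Fin N → ℝ) (hv : (supp v).card ≤ k)
    (hres : l2 (A.mulVec v - A.mulVec x) ≤ Real.sqrt τ / β)
    (hτ2 : Real.sqrt τ < (r - η / (1 - δ)) / (1 + 1 / ((1 - δ) * β))) :
    ∀ i : Fin N,
      |restr (Sr r x) x i - v i| ≤ Real.sqrt τ / (β * (1 - δ)) + η / (1 - δ) ∧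
      Real.sqrt τ / (β * (1 - δ)) + η / (1 - δ) < r - Real.sqrt τ := by
  intro i
  have hd : (0:ℝ) < 1 - δ := by linarith
  set w : Fin N → ℝ := restr (Sr r x) x - v with hw
  -- support bound
  have hsupp : (supp w).card ≤ 2 * k := by
    have hsub : supp w ⊆ Sr r x ∪ supp v := by
      intro j hj
      simp only [supp, mem_filter, mem_univ, true_and] at hj
      by_contra hc
      simp only [mem_union, not_or] at hc
      apply hj
      have hv0 : v j = 0 := by
        by_contra h
        exact hc.2 (by simp [supp, h])
      simp [hw, restr, hc.1, hv0]
    calc (supp w).card ≤ (Sr r x ∪ supp v).card := Finset.card_le_card hsub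
      _ ≤ (Sr r x).card + (supp v).card := Finset.card_union_le _ _
      _ ≤ 2 * k := by omega
  have hRw := (hRIP w hsupp).1
  -- decomposition restr (Sr r x) x = x - restr (Sr r x)ᶜ x
  have hdec : restr (Sr r x) x = x - restr (Sr r x)ᶜ x := by
    funext j
    by_cases h : j ∈ Sr r x <;> simp [restr, h]
  have hAw : A.mulVec w = -(A.mulVec v - A.mulVec x) + -(A.mulVec (restr (Sr r x)ᶜ x)) := by
    rw [hw, hdec]
    rw [show x - restr (Sr r x)ᶜ x - v = (x - v) - restr (Sr r x)ᶜ x by ring]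
    rw [Matrix.mulVec_sub, Matrix.mulVec_sub]
    ring
  have hbound : l2 (A.mulVec w) ≤ Real.sqrt τ / β + η := by
    rw [hAw]
    calc l2 (-(A.mulVec v - A.mulVec x) + -(A.mulVec (restr (Sr r x)ᶜ x)))
        ≤ l2 (-(A.mulVec v - A.mulVec x)) + l2 (-(A.mulVec (restr (Sr r x)ᶜ x))) := l2_add_le' _ _
      _ = l2 (A.mulVec v - A.mulVec x) + l2 (A.mulVec (restr (Sr r x)ᶜ x)) := by rw [l2_neg', l2_neg']
      _ ≤ Real.sqrt τ / β + η := add_le_add hres ((hAnorm _).trans htail2)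
  have hlw : l2 w ≤ Real.sqrt τ / (β * (1 - δ)) + η / (1 - δ) := by
    have h1 : (1 - δ) * l2 w ≤ Real.sqrt τ / β + η := le_trans hRw hbound
    have h2 : l2 w ≤ (Real.sqrt τ / β + η) / (1 - δ) := by
      rw [le_div_iff₀ hd]; linarith
    have h3 : (Real.sqrt τ / β + η) / (1 - δ) = Real.sqrt τ / (β * (1 - δ)) + η / (1 - δ) := by
      field_simp
    linarith [h3 ▸ h2]
  have habs : |restr (Sr r x) x i - v i| ≤ Real.sqrt τ / (β * (1 - δ)) + η / (1 - δ) :=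
    le_trans (abs_le_l2' w i) hlw
  refine ⟨habs, ?_⟩
  have hden : (0:ℝ) < 1 + 1 / ((1 - δ) * β) := by positivity
  rw [lt_div_iff₀ hden] at hτ2
  have hs : Real.sqrt τ * (1 + 1 / ((1 - δ) * β)) = Real.sqrt τ + Real.sqrt τ / ((1 - δ) * β) := by
    field_simp
  rw [hs] at hτ2
  have : Real.sqrt τ / (β * (1 - δ)) = Real.sqrt τ / ((1 - δ) * β) := by ring_nf
  linarith
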